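/- Let R(x) = (ε + |x|²)^p on ℝ^m with ε > 0 and p > 1. Then there is a constant C(p) depending only on p such that for all x, y ∈ ℝ^m: R(x+y) − R(x) − ⟨∇R(x), y⟩ ≤ C(p){ (ε+|x|²)^{p−1}|y|² + (ε+|x|²)^{p−2}|y|⁴ + (ε+|x|²)|y|^{2p−2} + |y|^{2p} }. -/

import Mathlib

open Real Set Filter Topology
open scoped RealInnerProductSpace NNReal
-- Bernoulli-based convexity inequality for rpow
lemma bern' {p : ℝ} (hp : 1 ≤ p) {u w : ℝ} (hu : 0 < u) (hw : 0 ≤ w) :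
    u ^ p + p * u ^ (p - 1) * (w - u) ≤ w ^ p := by
  have hs : (-1 : ℝ) ≤ w / u - 1 := by
    have : 0 ≤ w / u := div_nonneg hw hu.le
    linarith
  have h := one_add_mul_self_le_rpow_one_add hs hp
  rw [show (1 + (w / u - 1)) = w / u by ring] at h
  rw [Real.div_rpow hw hu.le] at h
  have hup : 0 < u ^ p := Real.rpow_pos_of_pos hu p
  have h2 := mul_le_mul_of_nonneg_left h hup.le
  have he : u ^ (p - 1) = u ^ p / u := by
    rw [Real.rpow_sub hu, Real.rpow_one]
  rw [he]
  have hu' : u ≠ 0 := hu.ne'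
  have hup' : (u:ℝ) ^ p ≠ 0 := hup.ne'
  calc u ^ p + p * (u ^ p / u) * (w - u)
      = u ^ p * (1 + p * (w / u - 1)) := by field_simp
    _ ≤ u ^ p * (w ^ p / u ^ p) := h2
    _ = w ^ p := by field_simp
lemma subadd' {q : ℝ} (hq0 : 0 ≤ q) (hq1 : q ≤ 1) {x y : ℝ} (hx : 0 ≤ x) (hy : 0 ≤ y) :
    (x + y) ^ q ≤ x ^ q + y ^ q := by
  have h := NNReal.rpow_add_le_add_rpow x.toNNReal y.toNNReal hq0 hq1
  have h2 : (((x.toNNReal + y.toNNReal : ℝ≥0) : ℝ)) ^ q ≤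
      ((x.toNNReal : ℝ)) ^ q + ((y.toNNReal : ℝ)) ^ q := by
    exact_mod_cast h
  rwa [NNReal.coe_add, Real.coe_toNNReal x hx, Real.coe_toNNReal y hy] at h2

lemma two_bound' {r : ℝ} (hr : 0 ≤ r) {s t : ℝ} (hs : 0 ≤ s) (ht : 0 ≤ t) :
    (s + t) ^ r ≤ 2 ^ r * (s ^ r + t ^ r) := by
  have hm : 0 ≤ max s t := le_trans hs (le_max_left _ _)
  have h1 : s + t ≤ 2 * max s t := by
    have := le_max_left s t; have := le_max_right s t; linarith
  calc (s + t) ^ r ≤ (2 * max s t) ^ r :=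
        Real.rpow_le_rpow (by linarith) h1 hr
    _ = 2 ^ r * (max s t) ^ r := Real.mul_rpow (by norm_num) hm
    _ ≤ 2 ^ r * (s ^ r + t ^ r) := by
        apply mul_le_mul_of_nonneg_left _ (Real.rpow_nonneg (by norm_num) r)
        rcases max_choice s t with h | h <;> rw [h]
        · nlinarith [Real.rpow_nonneg ht r]
        · nlinarith [Real.rpow_nonneg hs r]

lemma scalar' {p : ℝ} (hp : 1 < p) : ∃ K : ℝ, 0 < K ∧ ∀ u w : ℝ, 0 < u → 0 < w →
    w ^ p - u ^ p - p * u ^ (p - 1) * (w - u) ≤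
      K * (u ^ (p - 2) * (w - u) ^ 2 + |w - u| ^ p) := by
  have hp0 : (0:ℝ) < p := by linarith
  have h2p : (0:ℝ) < 2 ^ p := Real.rpow_pos_of_pos (by norm_num) p
  refine ⟨p * p * 2 ^ p + p, by positivity, ?_⟩
  intro u w hu hw
  have hd2 : 0 ≤ u ^ (p - 2) * (w - u) ^ 2 := by
    have := Real.rpow_nonneg hu.le (p - 2); positivity
  by_cases hd0 : w = u
  · subst hd0
    simp [Real.zero_rpow hp0.ne']
  have hdne : w - u ≠ 0 := sub_ne_zero.mpr hd0
  have habs : (0:ℝ) < |w - u| := abs_pos.mpr hdne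
  have stepA : w ^ p - u ^ p - p * u ^ (p - 1) * (w - u) ≤
      p * (w ^ (p - 1) - u ^ (p - 1)) * (w - u) := by
    have h := bern' hp.le hw hu.le
    nlinarith [h]
  have habsp : |w - u| ^ p = |w - u| ^ (p - 1) * |w - u| := by
    rw [show p = p - 1 + 1 by ring, Real.rpow_add_one (abs_ne_zero.mpr hdne)]
    ring_nf
  rcases le_or_gt p 2 with hple | hpgt
  · -- 1 < p ≤ 2
    have key : (w ^ (p - 1) - u ^ (p - 1)) * (w - u) ≤ |w - u| ^ (p - 1) * |w - u| := by
      rcases le_total u w with h | h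
      · have hda : |w - u| = w - u := abs_of_nonneg (by linarith)
        have h1 : w ^ (p-1) ≤ u ^ (p-1) + (w - u) ^ (p-1) := by
          have := subadd' (by linarith : (0:ℝ) ≤ p - 1) (by linarith) hu.le
            (by linarith : (0:ℝ) ≤ w - u)
          rwa [show u + (w - u) = w by ring] at this
        rw [hda]
        nlinarith [h1]
      · have hda : |w - u| = u - w := by rw [abs_of_nonpos (by linarith : w - u ≤ 0)]; ring
        have h1 : u ^ (p-1) ≤ w ^ (p-1) + (u - w) ^ (p-1) := by
          have := subadd' (by linarith : (0:ℝ) ≤ p - 1) (by linarith) hw.le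
            (by linarith : (0:ℝ) ≤ u - w)
          rwa [show w + (u - w) = u by ring] at this
        rw [hda]
        nlinarith [h1]
    calc w ^ p - u ^ p - p * u ^ (p - 1) * (w - u)
        ≤ p * (w ^ (p - 1) - u ^ (p - 1)) * (w - u) := stepA
      _ ≤ p * (|w - u| ^ (p - 1) * |w - u|) := by nlinarith [key]
      _ = p * |w - u| ^ p := by rw [habsp]
      _ ≤ (p * p * 2 ^ p + p) * (u ^ (p - 2) * (w - u) ^ 2 + |w - u| ^ p) := by
          have hap : 0 ≤ |w - u| ^ p := Real.rpow_nonneg habs.le p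
          nlinarith [mul_nonneg (mul_nonneg (mul_nonneg hp0.le hp0.le) h2p.le) hap,
            mul_nonneg (mul_nonneg (mul_nonneg hp0.le hp0.le) h2p.le) hd2,
            mul_nonneg hp0.le hd2]
  · -- p > 2
    have hq1 : (1:ℝ) ≤ p - 1 := by linarith
    have hsq : 0 ≤ (w - u) ^ 2 := sq_nonneg _
    have key : (w ^ (p - 1) - u ^ (p - 1)) * (w - u) ≤
        (p - 1) * (u + |w - u|) ^ (p - 2) * (w - u) ^ 2 := by
      rcases le_total u w with h | h
      · have hda : |w - u| = w - u := abs_of_nonneg (by linarith)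
        have h1 := bern' hq1 hw hu.le
        have e1 : w ^ (p-1) - u ^ (p-1) ≤ (p-1) * w ^ (p-1-1) * (w - u) := by nlinarith [h1]
        have e2 := mul_le_mul_of_nonneg_right e1 (by linarith : (0:ℝ) ≤ w - u)
        have h2 : w ^ (p - 1 - 1) ≤ (u + |w - u|) ^ (p - 2) := by
          rw [show p - 1 - 1 = p - 2 by ring]
          exact Real.rpow_le_rpow hw.le (by rw [hda]; linarith) (by linarith)
        have e3 : (p-1) * w ^ (p-1-1) * (w-u)^2 ≤ (p-1) * (u + |w - u|) ^ (p-2) * (w-u)^2 :=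
          mul_le_mul_of_nonneg_right (mul_le_mul_of_nonneg_left h2 (by linarith)) hsq
        nlinarith [e2, e3]
      · have hda : |w - u| = u - w := by rw [abs_of_nonpos (by linarith : w - u ≤ 0)]; ring
        have h1 := bern' hq1 hu hw.le
        have e1 : u ^ (p-1) - w ^ (p-1) ≤ (p-1) * u ^ (p-1-1) * (u - w) := by nlinarith [h1]
        have e2 := mul_le_mul_of_nonneg_right e1 (by linarith : (0:ℝ) ≤ u - w)
        have h2 : u ^ (p - 1 - 1) ≤ (u + |w - u|) ^ (p - 2) := by
          rw [show p - 1 - 1 = p - 2 by ring]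
          exact Real.rpow_le_rpow hu.le (by rw [hda]; linarith) (by linarith)
        have e3 : (p-1) * u ^ (p-1-1) * (u-w)^2 ≤ (p-1) * (u + |w - u|) ^ (p-2) * (u-w)^2 :=
          mul_le_mul_of_nonneg_right (mul_le_mul_of_nonneg_left h2 (by linarith)) (sq_nonneg _)
        nlinarith [e2, e3]
    have split : (u + |w - u|) ^ (p - 2) ≤ 2 ^ (p - 2) * (u ^ (p - 2) + |w - u| ^ (p - 2)) :=
      two_bound' (by linarith) hu.le habs.le
    have habs2 : |w - u| ^ (p - 2) * (w - u) ^ 2 = |w - u| ^ p := by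
      rw [← sq_abs, ← Real.rpow_natCast |w - u| 2, ← Real.rpow_add habs]
      norm_num
    have h2p2 : (0:ℝ) < 2 ^ (p - 2) := Real.rpow_pos_of_pos (by norm_num) _
    have h2p2le : (2:ℝ) ^ (p - 2) ≤ 2 ^ p :=
      Real.rpow_le_rpow_left_iff (by norm_num) |>.mpr (by linarith)
    have hap : 0 ≤ |w - u| ^ p := Real.rpow_nonneg habs.le p
    have e4 : p * ((w ^ (p - 1) - u ^ (p - 1)) * (w - u)) ≤
        p * ((p - 1) * (u + |w - u|) ^ (p - 2) * (w - u) ^ 2) :=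
      mul_le_mul_of_nonneg_left key hp0.le
    have e5 : (p - 1) * (u + |w - u|) ^ (p - 2) * (w - u) ^ 2 ≤
        (p - 1) * (2 ^ (p - 2) * (u ^ (p - 2) + |w - u| ^ (p - 2))) * (w - u) ^ 2 :=
      mul_le_mul_of_nonneg_right (mul_le_mul_of_nonneg_left split (by linarith)) hsq
    have e6 : p * ((p - 1) * (2 ^ (p - 2) * (u ^ (p - 2) + |w - u| ^ (p - 2))) * (w - u) ^ 2)
        = p * (p - 1) * 2 ^ (p - 2) * (u ^ (p - 2) * (w - u) ^ 2 + |w - u| ^ p) := by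
      rw [← habs2]; ring
    have e7 : p * (p - 1) * 2 ^ (p - 2) ≤ p * p * 2 ^ p + p := by
      have : p * (p - 1) * 2 ^ (p - 2) ≤ p * p * 2 ^ p :=
        mul_le_mul (mul_le_mul le_rfl (by linarith) (by linarith) hp0.le) h2p2le h2p2.le
          (by positivity)
      linarith
    have e8 : p * (p - 1) * 2 ^ (p - 2) * (u ^ (p - 2) * (w - u) ^ 2 + |w - u| ^ p) ≤
        (p * p * 2 ^ p + p) * (u ^ (p - 2) * (w - u) ^ 2 + |w - u| ^ p) :=
      mul_le_mul_of_nonneg_right e7 (by linarith)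
    have e5' := mul_le_mul_of_nonneg_left e5 hp0.le
    linarith [stepA, e4, e5', e6.le, e6.ge, e8]
lemma finarith {K P A T U V W : ℝ} (hK : 0 ≤ K) (hP : 0 ≤ P) (hA : 0 ≤ A)
    (hT : 0 ≤ T) (hU : 0 ≤ U) (hV : 0 ≤ V) (hW : 0 ≤ W) :
    K * ((6 * T + 3 * U) + A * (A * ((T + V) / 2) + W)) + P * T ≤
      (K * (9 + A * A + A) + P) * (T + U + V + W) := by
  have h1 : 0 ≤ K * (3 * T + 6 * U + 9 * V + 9 * W) := by positivity
  have h2 : 0 ≤ K * A * A * (T / 2 + U + V / 2 + W) := by positivity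
  have h3 : 0 ≤ K * A * (T + U + V) := by positivity
  have h4 : 0 ≤ P * (U + V + W) := by positivity
  linarith [h1, h2, h3, h4]

lemma sqbound {s b : ℝ} (hs : 0 ≤ s) (hb : 0 ≤ b) :
    (2 * s * b + b ^ 2) ^ 2 ≤ 6 * s ^ 2 * b ^ 2 + 3 * b ^ 4 := by
  nlinarith [sq_nonneg (s * b - b ^ 2)]


set_option maxHeartbeats 1000000 in
/-- Taylor-type bound for `R(x) = (ε+|x|²)^p`, `p > 1`, with
`∇R(x) = 2p(ε+|x|²)^{p-1} x`. -/
theorem stmt10 (m : ℕ) (ε p : ℝ) (hε : 0 < ε) (hp : 1 < p) :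
    ∃ C : ℝ, 0 < C ∧
      ∀ x y : EuclideanSpace ℝ (Fin m),
        (ε + ‖x + y‖ ^ 2) ^ p - (ε + ‖x‖ ^ 2) ^ p -
            (inner ℝ ((2 * p * (ε + ‖x‖ ^ 2) ^ (p - 1)) • x) y : ℝ) ≤
          C * ((ε + ‖x‖ ^ 2) ^ (p - 1) * ‖y‖ ^ 2 +
                (ε + ‖x‖ ^ 2) ^ (p - 2) * ‖y‖ ^ 4 +
                (ε + ‖x‖ ^ 2) * ‖y‖ ^ (2 * p - 2) +
                ‖y‖ ^ (2 * p)) := by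
  obtain ⟨K, hK, hsc⟩ := scalar' hp
  have hp0 : (0:ℝ) < p := by linarith
  have h2p : (0:ℝ) < 2 ^ p := Real.rpow_pos_of_pos (by norm_num) p
  refine ⟨K * (9 + 2 ^ p * 2 ^ p + 2 ^ p) + p, by positivity, ?_⟩
  intro x y
  by_cases hy0 : y = 0
  · subst hy0
    simp only [add_zero, norm_zero, inner_zero_right, sub_zero, sub_self]
    rw [Real.zero_rpow (by linarith : (0:ℝ) < 2 * p - 2).ne',
      Real.zero_rpow (by linarith : (0:ℝ) < 2 * p).ne']
    norm_num
  have hb : (0:ℝ) < ‖y‖ := norm_pos_iff.mpr hy0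
  set b : ℝ := ‖y‖ with hb_def
  set a : ℝ := ε + ‖x‖ ^ 2 with ha_def
  set v : ℝ := ε + ‖x + y‖ ^ 2 with hv_def
  have hA : 0 < a := by positivity
  have hV : 0 < v := by positivity
  have key := hsc a v hA hV
  have hnorm : ‖x + y‖ ^ 2 = ‖x‖ ^ 2 + 2 * ⟪x, y⟫ + ‖y‖ ^ 2 := norm_add_sq_real x y
  have hd : v - a = 2 * ⟪x, y⟫ + b ^ 2 := by rw [hv_def, ha_def, hnorm]; ring
  have hinner : (inner ℝ ((2 * p * a ^ (p - 1)) • x) y : ℝ) = 2 * p * a ^ (p - 1) * ⟪x, y⟫ :=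
    real_inner_smul_left _ _ _
  have lhs_eq : v ^ p - a ^ p - (inner ℝ ((2 * p * a ^ (p - 1)) • x) y : ℝ) =
      (v ^ p - a ^ p - p * a ^ (p - 1) * (v - a)) + p * a ^ (p - 1) * b ^ 2 := by
    rw [hinner, hd]; ring
  set s : ℝ := Real.sqrt a with hs_def
  have hs0 : 0 < s := Real.sqrt_pos.mpr hA
  have hs2 : s ^ 2 = a := Real.sq_sqrt hA.le
  have hxs : ‖x‖ ≤ s := by
    calc ‖x‖ = Real.sqrt (‖x‖ ^ 2) := (Real.sqrt_sq (norm_nonneg x)).symm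
      _ ≤ Real.sqrt a := Real.sqrt_le_sqrt (by rw [ha_def]; linarith)
  have hdb : |v - a| ≤ 2 * s * b + b ^ 2 := by
    rw [hd]
    have h1 : |2 * ⟪x, y⟫ + b ^ 2| ≤ 2 * |⟪x, y⟫| + b ^ 2 := by
      calc |2 * ⟪x, y⟫ + b ^ 2| ≤ |2 * ⟪x, y⟫| + |b ^ 2| := abs_add_le _ _
        _ = 2 * |⟪x, y⟫| + b ^ 2 := by rw [abs_mul, abs_two, abs_of_nonneg (sq_nonneg b)]
    have h2 : |⟪x, y⟫| ≤ ‖x‖ * b := abs_real_inner_le_norm x y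
    linarith [h1, h2, mul_le_mul_of_nonneg_right hxs hb.le]
  -- abbreviations for RHS terms
  set T : ℝ := a ^ (p - 1) * b ^ 2 with hT_def
  set U : ℝ := a ^ (p - 2) * b ^ 4 with hU_def
  set V : ℝ := a * b ^ (2 * p - 2) with hV_def2
  set W : ℝ := b ^ (2 * p) with hW_def
  have hT : 0 ≤ T := mul_nonneg (Real.rpow_nonneg hA.le _) (by positivity)
  have hU : 0 ≤ U := mul_nonneg (Real.rpow_nonneg hA.le _) (by positivity)
  have hVn : 0 ≤ V := mul_nonneg hA.le (Real.rpow_nonneg hb.le _)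
  have hW : 0 ≤ W := Real.rpow_nonneg hb.le _
  have hPa : a ^ (p - 2) * a = a ^ (p - 1) := by
    rw [show p - 1 = p - 2 + 1 by ring, Real.rpow_add_one hA.ne']
  -- bound 1 : a^{p-2} (v-a)^2 ≤ 6T + 3U
  have hdd : (v - a) ^ 2 ≤ (2 * s * b + b ^ 2) ^ 2 := by
    have h := abs_le.mp hdb
    exact sq_le_sq' h.1 h.2
  have bound1 : a ^ (p - 2) * (v - a) ^ 2 ≤ 6 * T + 3 * U := by
    have h1 : (v - a) ^ 2 ≤ 6 * a * b ^ 2 + 3 * b ^ 4 :=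
      le_trans hdd (by rw [← hs2]; exact sqbound hs0.le hb.le)
    have h2 : a ^ (p - 2) * (v - a) ^ 2 ≤ a ^ (p - 2) * (6 * a * b ^ 2 + 3 * b ^ 4) :=
      mul_le_mul_of_nonneg_left h1 (Real.rpow_nonneg hA.le _)
    calc a ^ (p - 2) * (v - a) ^ 2 ≤ a ^ (p - 2) * (6 * a * b ^ 2 + 3 * b ^ 4) := h2
      _ = 6 * (a ^ (p - 2) * a) * b ^ 2 + 3 * (a ^ (p - 2) * b ^ 4) := by ring
      _ = 6 * T + 3 * U := by rw [hPa, hT_def, hU_def]; ring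
  -- AM-GM : s^p * b^p ≤ (T + V) / 2
  have hsp : s ^ p = a ^ (p / 2) := by
    rw [hs_def, Real.sqrt_eq_rpow, ← Real.rpow_mul hA.le]
    congr 1; ring
  have hbp : b ^ (p - 1) * b = b ^ p := by
    rw [← Real.rpow_add_one hb.ne' (p - 1), show p - 1 + 1 = p by ring]
  have hu2 : (a ^ ((p - 1) / 2) * b) ^ 2 = T := by
    rw [mul_pow, ← Real.rpow_natCast (a ^ ((p - 1) / 2)) 2, ← Real.rpow_mul hA.le,
      show (p - 1) / 2 * ((2:ℕ):ℝ) = p - 1 by push_cast; ring, hT_def]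
  have hw2 : (s * b ^ (p - 1)) ^ 2 = V := by
    rw [mul_pow, hs2, ← Real.rpow_natCast (b ^ (p - 1)) 2, ← Real.rpow_mul hb.le,
      show (p - 1) * ((2:ℕ):ℝ) = 2 * p - 2 by push_cast; ring, hV_def2]
  have haa : a ^ ((p - 1) / 2) * a ^ ((1:ℝ) / 2) = a ^ (p / 2) := by
    rw [← Real.rpow_add hA]; congr 1; ring
  have huw : (a ^ ((p - 1) / 2) * b) * (s * b ^ (p - 1)) = s ^ p * b ^ p := by
    rw [hsp, ← hbp, hs_def, Real.sqrt_eq_rpow]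
    calc a ^ ((p - 1) / 2) * b * (a ^ ((1:ℝ) / 2) * b ^ (p - 1))
        = (a ^ ((p - 1) / 2) * a ^ ((1:ℝ) / 2)) * (b ^ (p - 1) * b) := by ring
      _ = a ^ (p / 2) * (b ^ (p - 1) * b) := by rw [haa]
  have hamgm : s ^ p * b ^ p ≤ (T + V) / 2 := by
    have h := two_mul_le_add_sq (a ^ ((p - 1) / 2) * b) (s * b ^ (p - 1))
    rw [hu2, hw2] at h
    linarith [h, huw.le, huw.ge]
  -- bound 2 : |v-a|^p ≤ 2^p * (2^p * (s^p b^p) + W)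
  have h2sb : (2 * s * b) ^ p = 2 ^ p * (s ^ p * b ^ p) := by
    rw [Real.mul_rpow (by positivity) hb.le, Real.mul_rpow (by norm_num) hs0.le]
    ring
  have hb2p : (b ^ 2) ^ p = b ^ (2 * p) := by
    rw [← Real.rpow_natCast b 2, ← Real.rpow_mul hb.le]
    norm_num
  have bound2 : |v - a| ^ p ≤ 2 ^ p * (2 ^ p * (s ^ p * b ^ p) + W) := by
    calc |v - a| ^ p ≤ (2 * s * b + b ^ 2) ^ p :=
          Real.rpow_le_rpow (abs_nonneg _) hdb hp0.le
      _ ≤ 2 ^ p * ((2 * s * b) ^ p + (b ^ 2) ^ p) :=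
          two_bound' hp0.le (by positivity) (by positivity)
      _ = 2 ^ p * (2 ^ p * (s ^ p * b ^ p) + W) := by rw [h2sb, hb2p, hW_def]
  have bound2' : |v - a| ^ p ≤ 2 ^ p * (2 ^ p * ((T + V) / 2) + W) := by
    have : 2 ^ p * (s ^ p * b ^ p) ≤ 2 ^ p * ((T + V) / 2) :=
      mul_le_mul_of_nonneg_left hamgm h2p.le
    have : 2 ^ p * (2 ^ p * (s ^ p * b ^ p) + W) ≤ 2 ^ p * (2 ^ p * ((T + V) / 2) + W) :=
      mul_le_mul_of_nonneg_left (by linarith) h2p.le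
    linarith [bound2]
  -- assemble
  have c1 : K * (a ^ (p - 2) * (v - a) ^ 2 + |v - a| ^ p) ≤
      K * ((6 * T + 3 * U) + 2 ^ p * (2 ^ p * ((T + V) / 2) + W)) :=
    mul_le_mul_of_nonneg_left (add_le_add bound1 bound2') hK.le
  rw [lhs_eq]
  have final : K * ((6 * T + 3 * U) + 2 ^ p * (2 ^ p * ((T + V) / 2) + W)) +
      p * a ^ (p - 1) * b ^ 2 ≤ (K * (9 + 2 ^ p * 2 ^ p + 2 ^ p) + p) * (T + U + V + W) := by
    have hpT : p * a ^ (p - 1) * b ^ 2 = p * T := by rw [hT_def]; ring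
    rw [hpT]
    exact finarith hK.le hp0.le h2p.le hT hU hVn hW
  exact le_trans (add_le_add_left (le_trans key c1) (p * a ^ (p - 1) * b ^ 2)) final
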